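/- Let (V,w) be a finite weighted graph as in the context, let T be an encoding tree of (V,w) of height K in which every leaf is at height 0 and the root λ at height K, and for 1 ≤ h ≤ K−1 let U_h be the set of nodes of T at height h. With H(S) = − Σ_{v∈V} (d_v/vol(V))·log(d_v/vol(V)), H(U_h) = − Σ_{α∈U_h} (vol(V_α)/vol(V))·log(vol(V_α)/vol(V)), and η_h = max_{α∈U_h} ((Σ_{i=1}^{l_α} g(V_{α_i}) − g(V_α))/vol(V_α)) where α_1,…,α_{l_α} are the children of α, the structural entropy satisfies H^T ≥ H(S) − Σ_{h=1}^{K−1} η_h·H(U_h). -/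

import Mathlib

open Finset

variable {V ι : Type*}

/-- The (weighted) degree of a vertex. -/
noncomputable def deg [Fintype V] (w : V → V → ℝ) (v : V) : ℝ := ∑ u, w v u

/-- The volume of a vertex subset: the sum of the degrees of its vertices. -/
noncomputable def vol [Fintype V] (w : V → V → ℝ) (A : Finset V) : ℝ := ∑ v ∈ A, deg w v

/-- The cut of a vertex subset: the total weight of edges crossing its boundary. -/
noncomputable def cut [Fintype V] [DecidableEq V] (w : V → V → ℝ) (A : Finset V) : ℝ :=
  ∑ u ∈ Aᶜ, ∑ v ∈ A, w u v

/-- An encoding tree of a weighted graph on the vertex set `V`, with node type `ι`: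
a finite rooted tree (given by a parent map), each node labeled with a nonempty subset
of `V`, the root labeled with `V` itself, every leaf labeled with a singleton, and the
labels of the children of any internal node forming a partition of that node's label. -/
structure EncodingTree (V : Type*) [Fintype V] [DecidableEq V]
    (ι : Type*) [Fintype ι] [DecidableEq ι] where
  root : ι
  parent : ι → ι
  label : ι → Finset V
  parent_root : parent root = root
  label_root : label root = Finset.univ
  label_nonempty : ∀ α, (label α).Nonempty
  leaf_singleton : ∀ α, (∀ β, β ≠ root → parent β ≠ α) → (label α).card = 1
  children_disjoint : ∀ ⦃α β γ : ι⦄, β ≠ root → γ ≠ root → parent β = α → parent γ = α →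
    β ≠ γ → Disjoint (label β) (label γ)
  children_union : ∀ α : ι, (∃ β, β ≠ root ∧ parent β = α) →
    (Finset.univ.filter fun β => β ≠ root ∧ parent β = α).biUnion label = label α

variable [Fintype V] [DecidableEq V] [Fintype ι] [DecidableEq ι]

/-- The children of a node of an encoding tree. -/
def EncodingTree.children (T : EncodingTree V ι) (α : ι) : Finset ι :=
  Finset.univ.filter fun β => β ≠ T.root ∧ T.parent β = α

set_option linter.unusedSectionVars false

lemma myVolPos (w : V → V → ℝ) (hdeg : ∀ v, 0 < deg w v) {A : Finset V} (hA : A.Nonempty) :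
    0 < vol w A := Finset.sum_pos (fun v _ => hdeg v) hA

lemma myVolMono (w : V → V → ℝ) (hdeg : ∀ v, 0 < deg w v) {A B : Finset V} (h : A ⊆ B) :
    vol w A ≤ vol w B :=
  Finset.sum_le_sum_of_subset_of_nonneg h (fun v _ _ => (hdeg v).le)

lemma myCutSingleton (w : V → V → ℝ) (hsym : ∀ u v, w u v = w v u) (hloop : ∀ v, w v v = 0)
    (v : V) : cut w {v} = deg w v := by
  have h1 : cut w {v} = ∑ u ∈ ({v} : Finset V)ᶜ, w u v := by
    simp [cut]
  have h2 : ∑ u ∈ ({v} : Finset V), w u v + ∑ u ∈ ({v} : Finset V)ᶜ, w u v = ∑ u, w u v :=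
    Finset.sum_add_sum_compl _ _
  simp only [Finset.sum_singleton, hloop, zero_add] at h2
  rw [h1, h2, deg]
  exact Finset.sum_congr rfl fun u _ => hsym u v

lemma myChildrenMem (T : EncodingTree V ι) {α β : ι} :
    β ∈ T.children α ↔ β ≠ T.root ∧ T.parent β = α := by
  simp [EncodingTree.children]

lemma myLabelSubset (T : EncodingTree V ι) {β : ι} (hβ : β ≠ T.root) :
    T.label β ⊆ T.label (T.parent β) := by
  rw [← T.children_union (T.parent β) ⟨β, hβ, rfl⟩]
  exact Finset.subset_biUnion_of_mem T.label (by simp [hβ])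

lemma myHtLt (T : EncodingTree V ι) (K : ℕ) (ht : ι → ℕ) (hroot : ht T.root = K)
    (hparent : ∀ β, β ≠ T.root → ht (T.parent β) = ht β + 1) :
    ∀ β, β ≠ T.root → ht β < K := by
  set M := Finset.univ.sup ht with hM
  have hle : ∀ β, ht β ≤ M := fun β => Finset.le_sup (Finset.mem_univ β)
  have key : ∀ n β, M - ht β = n → β ≠ T.root → ht β < K := by
    intro n
    induction n using Nat.strong_induction_on with
    | _ n ih =>
      intro β hn hβ
      have h1 : ht (T.parent β) = ht β + 1 := hparent β hβ
      have h2 : ht β < M := by have := hle (T.parent β); omega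
      by_cases hp : T.parent β = T.root
      · rw [hp, hroot] at h1; omega
      · have := ih (M - ht (T.parent β)) (by omega) (T.parent β) rfl hp
        omega
  exact fun β hβ => key (M - ht β) β rfl hβ

lemma myDisj (T : EncodingTree V ι) (K : ℕ) (ht : ι → ℕ) (hroot : ht T.root = K)
    (hparent : ∀ β, β ≠ T.root → ht (T.parent β) = ht β + 1) :
    ∀ h α β, ht α = h → ht β = h → α ≠ β → Disjoint (T.label α) (T.label β) := by
  have hlt := myHtLt T K ht hroot hparent
  have key : ∀ n h, K - h = n → ∀ α β, ht α = h → ht β = h → α ≠ β →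
      Disjoint (T.label α) (T.label β) := by
    intro n
    induction n using Nat.strong_induction_on with
    | _ n ih =>
      intro h hn α β hα hβ hne
      by_cases hK : h < K
      · have hαr : α ≠ T.root := fun e => by rw [e, hroot] at hα; omega
        have hβr : β ≠ T.root := fun e => by rw [e, hroot] at hβ; omega
        by_cases hpp : T.parent α = T.parent β
        · exact T.children_disjoint hαr hβr rfl hpp.symm hne
        · have hpα : ht (T.parent α) = h + 1 := by rw [hparent α hαr, hα]
          have hpβ : ht (T.parent β) = h + 1 := by rw [hparent β hβr, hβ]
          have hd := ih (K - (h + 1)) (by omega) (h + 1) rfl _ _ hpα hpβ hpp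
          exact hd.mono (myLabelSubset T hαr) (myLabelSubset T hβr)
      · exfalso
        have hαr : α = T.root := by
          by_contra hc; have := hlt α hc; omega
        have hβr : β = T.root := by
          by_contra hc; have := hlt β hc; omega
        exact hne (hαr.trans hβr.symm)
  exact fun h α β hα hβ hne => key (K - h) h rfl α β hα hβ hne

lemma myCover (T : EncodingTree V ι) (ht : ι → ℕ)
    (hleaf : ∀ α, (∀ β, β ≠ T.root → T.parent β ≠ α) → ht α = 0)
    (hparent : ∀ β, β ≠ T.root → ht (T.parent β) = ht β + 1) :
    ∀ α v, v ∈ T.label α → ∃ ℓ, ht ℓ = 0 ∧ v ∈ T.label ℓ := by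
  have key : ∀ n α, ht α = n → ∀ v, v ∈ T.label α → ∃ ℓ, ht ℓ = 0 ∧ v ∈ T.label ℓ := by
    intro n
    induction n using Nat.strong_induction_on with
    | _ n ih =>
      intro α hα v hv
      by_cases hc : ∃ β, β ≠ T.root ∧ T.parent β = α
      · rw [← T.children_union α hc] at hv
        obtain ⟨β, hβmem, hvβ⟩ := Finset.mem_biUnion.1 hv
        obtain ⟨-, hβ1, hβ2⟩ := Finset.mem_filter.1 hβmem
        have hlt : ht β < n := by
          have := hparent β hβ1; rw [hβ2, hα] at this; omega
        exact ih (ht β) hlt β rfl v hvβ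
      · push_neg at hc
        exact ⟨α, hleaf α hc, hv⟩
  exact fun α v hv => key (ht α) α rfl v hv

lemma myLeafSum (T : EncodingTree V ι) (K : ℕ) (ht : ι → ℕ) (hroot : ht T.root = K)
    (hleaf : ∀ α, (∀ β, β ≠ T.root → T.parent β ≠ α) → ht α = 0)
    (hparent : ∀ β, β ≠ T.root → ht (T.parent β) = ht β + 1)
    (F : Finset V → ℝ) :
    ∑ α ∈ Finset.univ.filter (fun α => ht α = 0), F (T.label α) = ∑ v, F {v} := by
  have hdisj := myDisj T K ht hroot hparent
  have hsing : ∀ α, ht α = 0 → ∃ a, T.label α = {a} := by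
    intro α hα
    apply Finset.card_eq_one.1
    apply T.leaf_singleton
    intro β hβ hpβ
    have := hparent β hβ; rw [hpβ, hα] at this; omega
  refine Finset.sum_bij (fun α hα => (hsing α (Finset.mem_filter.1 hα).2).choose) ?_ ?_ ?_ ?_
  · intros; exact Finset.mem_univ _
  · intro α hα β hβ he
    by_contra hne
    have h1 := (hsing α (Finset.mem_filter.1 hα).2).choose_spec
    have h2 := (hsing β (Finset.mem_filter.1 hβ).2).choose_spec
    have hd := hdisj 0 α β (Finset.mem_filter.1 hα).2 (Finset.mem_filter.1 hβ).2 hne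
    rw [h1, h2, he] at hd
    simp at hd
  · intro v _
    have hv : v ∈ T.label T.root := by rw [T.label_root]; exact Finset.mem_univ v
    obtain ⟨ℓ, hℓ0, hvℓ⟩ := myCover T ht hleaf hparent T.root v hv
    refine ⟨ℓ, Finset.mem_filter.2 ⟨Finset.mem_univ _, hℓ0⟩, ?_⟩
    have h1 := (hsing ℓ hℓ0).choose_spec
    rw [h1] at hvℓ
    exact (Finset.mem_singleton.1 hvℓ).symm
  · intro α hα
    exact congrArg F (hsing α (Finset.mem_filter.1 hα).2).choose_spec


/-- The structural entropy of the weighted graph `(V, w)` under the encoding tree `T`: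
`H^T = − Σ_{α ≠ root} (g(V_α)/vol(V)) · log(vol(V_α)/vol(V_{α⁻}))`. -/
noncomputable def structEntropy (w : V → V → ℝ) (T : EncodingTree V ι) : ℝ :=
  - ∑ α ∈ Finset.univ.filter (fun α => α ≠ T.root),
      (cut w (T.label α) / vol w Finset.univ) *
        Real.log (vol w (T.label α) / vol w (T.label (T.parent α)))

/-- Shannon entropy of the normalized degree distribution:
`H(S) = − Σ_{v ∈ V} (d_v/vol(V)) · log(d_v/vol(V))`. -/
noncomputable def shannonDeg (w : V → V → ℝ) : ℝ :=
  - ∑ v, (deg w v / vol w Finset.univ) * Real.log (deg w v / vol w Finset.univ)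

/-- The layer entropy `H(U_h)` at height `h`, for a height function `ht` on the nodes:
`H(U_h) = − Σ_{α ∈ U_h} (vol(V_α)/vol(V)) · log(vol(V_α)/vol(V))`. -/
noncomputable def layerEntropy (w : V → V → ℝ) (T : EncodingTree V ι) (ht : ι → ℕ)
    (h : ℕ) : ℝ :=
  - ∑ α ∈ Finset.univ.filter (fun α => ht α = h),
      (vol w (T.label α) / vol w Finset.univ) *
        Real.log (vol w (T.label α) / vol w Finset.univ)

/-- The layer weight `η_h = max_{α ∈ U_h} ((Σ_i g(V_{α_i}) − g(V_α)) / vol(V_α))`,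
where the maximum is over the nodes at height `h` and `α_i` ranges over children of `α`. -/
noncomputable def layerWeight (w : V → V → ℝ) (T : EncodingTree V ι) (ht : ι → ℕ)
    (h : ℕ) : ℝ :=
  sSup ((fun α => ((∑ β ∈ T.children α, cut w (T.label β)) - cut w (T.label α)) /
    vol w (T.label α)) '' {α : ι | ht α = h})

/-- **Lower bound of Theorem 4.2.** For an encoding tree of height `K` (leaves at height
`0`, root at height `K`), the structural entropy satisfies
`H^T ≥ H(S) − Σ_{h=1}^{K−1} η_h · H(U_h)`. -/
theorem structural_entropy_ge_shannon_sub [Nonempty V]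
    (w : V → V → ℝ)
    (hsym : ∀ u v, w u v = w v u)
    (hnn : ∀ u v, 0 ≤ w u v)
    (hloop : ∀ v, w v v = 0)
    (hdeg : ∀ v, 0 < deg w v)
    (T : EncodingTree V ι) (K : ℕ) (ht : ι → ℕ)
    (hroot : ht T.root = K)
    (hleaf : ∀ α, (∀ β, β ≠ T.root → T.parent β ≠ α) → ht α = 0)
    (hparent : ∀ β, β ≠ T.root → ht (T.parent β) = ht β + 1) :
    shannonDeg w - ∑ h ∈ Finset.Icc 1 (K - 1), layerWeight w T ht h * layerEntropy w T ht h
      ≤ structEntropy w T := by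
  classical
  set W := vol w (Finset.univ : Finset V) with hWdef
  have hWpos : 0 < W := myVolPos w hdeg Finset.univ_nonempty
  have hvpos : ∀ α, 0 < vol w (T.label α) := fun α => myVolPos w hdeg (T.label_nonempty α)
  set L : ι → ℝ := fun α => Real.log (vol w (T.label α) / W) with hLdef
  set c : ι → ℝ := fun α => cut w (T.label α) with hcdef
  set s : ι → ℝ := fun α => ∑ β ∈ T.children α, c β with hsdef
  set P : Finset ι := Finset.univ.filter (fun α => α ≠ T.root) with hPdef
  have hLroot : L T.root = 0 := by
    rw [hLdef]
    simp only [T.label_root, ← hWdef]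
    rw [div_self hWpos.ne', Real.log_one]
  -- Step 1: structEntropy = ∑_{α ≠ root} ((s α − c α)/W) · L α
  have hsplit : structEntropy w T = ∑ α ∈ P, ((s α - c α) / W) * L α := by
    have hlog : ∀ α : ι, Real.log (vol w (T.label α) / vol w (T.label (T.parent α)))
        = L α - L (T.parent α) := by
      intro α
      rw [hLdef]
      simp only
      rw [Real.log_div (hvpos α).ne' (hvpos _).ne', Real.log_div (hvpos α).ne' hWpos.ne',
        Real.log_div (hvpos _).ne' hWpos.ne']
      ring
    have e1 : structEntropy w T
        = ∑ α ∈ P, ((c α / W) * L (T.parent α) - (c α / W) * L α) := by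
      rw [structEntropy, ← Finset.sum_neg_distrib]
      refine Finset.sum_congr rfl fun α _ => ?_
      rw [hlog α]
      ring
    have e2 : ∑ α ∈ P, (c α / W) * L (T.parent α) = ∑ p : ι, (s p / W) * L p := by
      rw [← Finset.sum_fiberwise_of_maps_to (g := T.parent) (t := (Finset.univ : Finset ι))
        (fun x _ => Finset.mem_univ _)]
      refine Finset.sum_congr rfl fun p _ => ?_
      have hPf : P.filter (fun α => T.parent α = p) = T.children p := by
        rw [hPdef, EncodingTree.children, Finset.filter_filter]
      rw [hPf, hsdef]
      simp only
      rw [Finset.sum_div, Finset.sum_mul]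
      refine Finset.sum_congr rfl fun β hβ => ?_
      rw [((myChildrenMem T).1 hβ).2]
    have e3 : ∑ p : ι, (s p / W) * L p = ∑ p ∈ P, (s p / W) * L p := by
      rw [hPdef, Finset.filter_ne']
      rw [← Finset.sum_erase_add Finset.univ _ (Finset.mem_univ T.root), hLroot,
        mul_zero, add_zero]
    rw [e1, Finset.sum_sub_distrib, e2, e3, ← Finset.sum_sub_distrib]
    refine Finset.sum_congr rfl fun α _ => ?_
    ring
  -- dispatch the degenerate case K = 0
  rcases Nat.eq_zero_or_pos K with hK0 | hK
  · subst hK0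
    have hall : ∀ β : ι, β = T.root := by
      intro β; by_contra hβ
      exact absurd (myHtLt T 0 ht hroot hparent β hβ) (by omega)
    have hPe : P = ∅ := by
      rw [hPdef]; ext β; simp [hall β]
    have hsE : structEntropy w T = 0 := by rw [hsplit, hPe]; simp
    have hcard : (Finset.univ : Finset V).card = 1 := by
      rw [← T.label_root]
      exact T.leaf_singleton T.root (fun β h1 _ => h1 (hall β))
    obtain ⟨v, hv⟩ := Finset.card_eq_one.1 hcard
    have hsh : shannonDeg w = 0 := by
      rw [shannonDeg, ← hWdef]
      have hWv : W = deg w v := by rw [hWdef, vol, hv, Finset.sum_singleton]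
      rw [show (Finset.univ : Finset V) = {v} from hv, Finset.sum_singleton, hWv,
        div_self (hdeg v).ne', Real.log_one]
      ring
    simp [hsE, hsh]
  -- main case K ≥ 1
  have hlt := myHtLt T K ht hroot hparent
  set F : ι → ℝ := fun α => ((s α - c α) / W) * L α with hFdef
  have e4 : structEntropy w T
      = ∑ h ∈ Finset.range K, ∑ α ∈ Finset.univ.filter (fun α => ht α = h), F α := by
    rw [hsplit, ← Finset.sum_fiberwise_of_maps_to (g := ht) (t := Finset.range K)
      (fun α hα => Finset.mem_range.2 (hlt α (Finset.mem_filter.1 hα).2))]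
    refine Finset.sum_congr rfl fun h hh => ?_
    have : P.filter (fun α => ht α = h) = Finset.univ.filter (fun α => ht α = h) := by
      ext β
      simp only [hPdef, Finset.mem_filter, Finset.mem_univ, true_and]
      constructor
      · tauto
      · intro hb
        refine ⟨fun hbr => ?_, hb⟩
        rw [hbr, hroot] at hb
        exact absurd (Finset.mem_range.1 hh) (by omega)
    rw [this]
  have hins : Finset.range K = insert 0 (Finset.Icc 1 (K - 1)) := by
    ext x; simp only [Finset.mem_range, Finset.mem_insert, Finset.mem_Icc]; omega
  have e5 : ∑ α ∈ Finset.univ.filter (fun α => ht α = 0), F α = shannonDeg w := by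
    have hzero : ∀ α ∈ Finset.univ.filter (fun α => ht α = 0),
        F α = (fun A => (-(cut w A) / W) * Real.log (vol w A / W)) (T.label α) := by
      intro α hα
      have hα0 : ht α = 0 := (Finset.mem_filter.1 hα).2
      have hce : T.children α = ∅ := by
        ext β
        simp only [Finset.notMem_empty, iff_false]
        intro hβ
        obtain ⟨h1, h2⟩ := (myChildrenMem T).1 hβ
        have := hparent β h1; rw [h2, hα0] at this; omega
      have hs0 : s α = 0 := by rw [hsdef]; simp [hce]
      rw [hFdef]
      simp only [hs0, hcdef, hLdef]
      ring
    rw [Finset.sum_congr rfl hzero,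
      myLeafSum T K ht hroot hleaf hparent (fun A => (-(cut w A) / W) * Real.log (vol w A / W))]
    rw [shannonDeg, ← hWdef, ← Finset.sum_neg_distrib]
    refine Finset.sum_congr rfl fun v _ => ?_
    rw [myCutSingleton w hsym hloop v]
    have : vol w {v} = deg w v := by rw [vol, Finset.sum_singleton]
    rw [this]
    ring
  have e6 : ∀ h ∈ Finset.Icc 1 (K - 1),
      -(layerWeight w T ht h * layerEntropy w T ht h)
        ≤ ∑ α ∈ Finset.univ.filter (fun α => ht α = h), F α := by
    intro h _
    have hbdd : BddAbove ((fun α => ((∑ β ∈ T.children α, cut w (T.label β)) - cut w (T.label α)) /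
        vol w (T.label α)) '' {α : ι | ht α = h}) := (Set.toFinite _).bddAbove
    have hle : ∀ α, ht α = h →
        (s α - c α) / vol w (T.label α) ≤ layerWeight w T ht h := by
      intro α hα
      rw [layerWeight]
      exact le_csSup hbdd ⟨α, hα, rfl⟩
    have hpt : ∀ α ∈ Finset.univ.filter (fun α => ht α = h),
        layerWeight w T ht h * ((vol w (T.label α) / W) * L α) ≤ F α := by
      intro α hα
      have hα' : ht α = h := (Finset.mem_filter.1 hα).2
      have hLle : L α ≤ 0 := by
        rw [hLdef]
        exact Real.log_nonpos (div_nonneg (hvpos α).le hWpos.le)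
          ((div_le_one hWpos).2 (myVolMono w hdeg (Finset.subset_univ _)))
      have hx : (vol w (T.label α) / W) * L α ≤ 0 :=
        mul_nonpos_of_nonneg_of_nonpos (div_nonneg (hvpos α).le hWpos.le) hLle
      have hFeq : F α = ((s α - c α) / vol w (T.label α)) * ((vol w (T.label α) / W) * L α) := by
        have key : (s α - c α) / vol w (T.label α) * (vol w (T.label α) / W)
            = (s α - c α) / W := by
          rw [div_mul_div_comm, mul_comm (vol w (T.label α)) W,
            mul_div_mul_right _ _ (hvpos α).ne']
        rw [hFdef]
        simp only
        rw [← key, mul_assoc]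
      rw [hFeq]
      exact mul_le_mul_of_nonpos_right (hle α hα') hx
    calc -(layerWeight w T ht h * layerEntropy w T ht h)
        = ∑ α ∈ Finset.univ.filter (fun α => ht α = h),
            layerWeight w T ht h * ((vol w (T.label α) / W) * L α) := by
          rw [layerEntropy, ← Finset.mul_sum, ← hWdef]
          simp only [hLdef]
          ring
      _ ≤ _ := Finset.sum_le_sum hpt
  rw [e4, hins, Finset.sum_insert (by simp), e5]
  have := Finset.sum_le_sum e6
  rw [Finset.sum_neg_distrib] at this
  linarith
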